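/- Let m be a natural number and let p_m be the polynomial p_m(x) = Σ_{j=0}^m [(2m − j)! m!] / [(2m)! (m − j)! j!] x^j. Then the entire function f(z) = e^{z} p_m(−z) − p_m(z) on ℂ vanishes to order at least 2m + 1 at z = 0; that is, the k-th derivative of f at 0 is zero for every k with 0 ≤ k ≤ 2m. -/

import Mathlib

/-- Key combinatorial identity. -/
lemma padeG (m : ℕ) : ∀ k : ℕ, ∀ n : ℕ, k ≤ n →
    (∑ j ∈ Finset.range (k+1), (-1:ℤ)^j * (k.choose j) * ((n-j).choose m)) =
      if k ≤ m then ((n-k).choose (m-k) : ℤ) else 0 := by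
  intro k
  induction k with
  | zero => intro n _; simp
  | succ k ih =>
    intro n hn
    have hkn : k ≤ n - 1 := by omega
    have step : (∑ j ∈ Finset.range (k+2), (-1:ℤ)^j * ((k+1).choose j) * ((n-j).choose m))
        = (∑ j ∈ Finset.range (k+1), (-1:ℤ)^j * (k.choose j) * ((n-j).choose m))
          - (∑ j ∈ Finset.range (k+1), (-1:ℤ)^j * (k.choose j) * ((n-1-j).choose m)) := by
      rw [Finset.sum_range_succ' (fun j => (-1:ℤ)^j * ((k+1).choose j) * ((n-j).choose m)) (k+1)]
      have e1 : ∀ j ∈ Finset.range (k+1),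
          (-1:ℤ)^(j+1) * ((k+1).choose (j+1)) * ((n-(j+1)).choose m)
          = -((-1:ℤ)^j * (k.choose j) * ((n-1-j).choose m))
            + (-((-1:ℤ)^j * (k.choose (j+1)) * ((n-1-j).choose m))) := by
        intro j _
        have : n - (j+1) = n - 1 - j := by omega
        rw [this, Nat.choose_succ_succ]
        push_cast
        ring
      rw [Finset.sum_congr rfl e1, Finset.sum_add_distrib]
      have e2 : (∑ j ∈ Finset.range (k+1), -((-1:ℤ)^j * (k.choose (j+1)) * ((n-1-j).choose m)))
          = (∑ j ∈ Finset.range (k+1), ((-1:ℤ)^(j+1) * (k.choose (j+1)) * ((n-(j+1)).choose m))) := by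
        refine Finset.sum_congr rfl fun j _ => ?_
        have : n - (j+1) = n - 1 - j := by omega
        rw [this, pow_succ]; ring
      rw [e2]
      have e3 : (∑ j ∈ Finset.range (k+1), ((-1:ℤ)^(j+1) * (k.choose (j+1)) * ((n-(j+1)).choose m)))
          = (∑ j ∈ Finset.range (k+2), ((-1:ℤ)^j * (k.choose j) * ((n-j).choose m)))
            - (-1:ℤ)^0 * (k.choose 0) * ((n-0).choose m) := by
        rw [Finset.sum_range_succ' (fun j => (-1:ℤ)^j * (k.choose j) * ((n-j).choose m)) (k+1)]
        ring
      rw [e3]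
      have h6 : (∑ j ∈ Finset.range (k+2), (-1:ℤ)^j * (k.choose j) * ((n-j).choose m))
          = ∑ j ∈ Finset.range (k+1), (-1:ℤ)^j * (k.choose j) * ((n-j).choose m) := by
        rw [Finset.sum_range_succ]; simp [Nat.choose_succ_self]
      have h7 : (∑ j ∈ Finset.range (k+1), (-1:ℤ)^j * (k.choose j) * ((n-1-j).choose m))
          = (∑ j ∈ Finset.range k, (-1:ℤ)^j * (k.choose j) * ((n-1-j).choose m))
            + (-1:ℤ)^k * ((n-1-k).choose m) := by
        rw [Finset.sum_range_succ]; simp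
      have h8 : (∑ j ∈ Finset.range (k+1), -((-1:ℤ)^j * (k.choose j) * ((n-1-j).choose m)))
          = -(∑ j ∈ Finset.range (k+1), (-1:ℤ)^j * (k.choose j) * ((n-1-j).choose m)) :=
        Finset.sum_neg_distrib _
      rw [h8, h6, h7]; simp only [Nat.choose_zero_right, Nat.cast_one]; ring
    rw [step, ih n (by omega), ih (n-1) hkn]
    by_cases h1 : k + 1 ≤ m
    · rw [if_pos (by omega), if_pos (by omega), if_pos h1]
      have h2 : n - 1 - k = n - (k+1) := by omega
      rw [h2]
      have h3 : n - k = (n - (k+1)) + 1 := by omega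
      have h4 : m - k = (m - (k+1)) + 1 := by omega
      rw [h3, h4, Nat.choose_succ_succ]
      push_cast; ring
    · by_cases h5 : k ≤ m
      · have hk : k = m := by omega
        rw [if_pos h5, if_pos h5, if_neg h1, hk]
        simp
      · rw [if_neg h5, if_neg h5, if_neg h1]; ring

lemma padeT (k : ℕ) (q : Polynomial ℂ) :
    (fun s : Polynomial ℂ => s - Polynomial.derivative s)^[k] q
      = ∑ j ∈ Finset.range (k+1),
          ((-1:ℂ)^j * (k.choose j : ℂ)) • ((⇑(Polynomial.derivative (R := ℂ)))^[j] q) := by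
  set D : Module.End ℂ (Polynomial ℂ) := Polynomial.derivative with hD
  have hfun : (fun s : Polynomial ℂ => s - Polynomial.derivative s) = ⇑(1 - D) := by
    funext s
    simp [LinearMap.sub_apply, hD]
  rw [hfun, ← Module.End.pow_apply]
  have hcomm : Commute (-D) (1 : Module.End ℂ (Polynomial ℂ)) := Commute.one_right _
  have hexp : (1 - D)^k
      = ∑ j ∈ Finset.range (k+1), (-D)^j * 1^(k-j) * (k.choose j : Module.End ℂ (Polynomial ℂ)) := by
    rw [sub_eq_neg_add]
    exact hcomm.add_pow k
  rw [hexp, LinearMap.sum_apply]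
  refine Finset.sum_congr rfl fun j hj => ?_
  have hneg : -D = (-1:ℂ) • D := (neg_one_smul ℂ D).symm
  rw [one_pow, mul_one, hneg, smul_pow, Module.End.mul_apply, Module.End.natCast_apply,
    LinearMap.smul_apply, Module.End.pow_apply]
  have hcom : (⇑D)^[j] (k.choose j • q) = k.choose j • ((⇑D)^[j] q) := by
    rw [← Module.End.pow_apply, ← Module.End.pow_apply, map_nsmul]
  rw [hcom, ← Nat.cast_smul_eq_nsmul ℂ, smul_smul]

lemma padeDeriv (q r : Polynomial ℂ) (z : ℂ) :
    HasDerivAt (fun z : ℂ => Complex.exp z * q.eval (-z) - r.eval z)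
      (Complex.exp z * (q - Polynomial.derivative q).eval (-z)
        - (Polynomial.derivative r).eval z) z := by
  have h1 : HasDerivAt (fun z : ℂ => q.eval (-z)) ((Polynomial.derivative q).eval (-z) * (-1)) z :=
    (q.hasDerivAt (-z)).comp z (hasDerivAt_neg' z)
  have h3 := ((Complex.hasDerivAt_exp z).mul h1).sub (r.hasDerivAt z)
  refine HasDerivAt.congr_deriv h3 ?_
  simp only [Polynomial.eval_sub]
  ring

lemma padeIter (p : Polynomial ℂ) (k : ℕ) :
    iteratedDeriv k (fun z : ℂ => Complex.exp z * p.eval (-z) - p.eval z)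
      = fun z : ℂ => Complex.exp z
            * (((fun s : Polynomial ℂ => s - Polynomial.derivative s)^[k] p).eval (-z))
          - ((⇑(Polynomial.derivative (R := ℂ)))^[k] p).eval z := by
  induction k with
  | zero => simp
  | succ k ih =>
    rw [iteratedDeriv_succ, ih]
    funext z
    rw [Function.iterate_succ_apply', Function.iterate_succ_apply']
    exact (padeDeriv _ _ z).deriv

theorem pade_numerator_defect (m : ℕ) (p : Polynomial ℂ)
    (hp : p = ∑ j ∈ Finset.range (m + 1),
      Polynomial.C
          ((((2 * m - j).factorial * m.factorial : ℕ) : ℂ) /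
            ((((2 * m).factorial * (m - j).factorial * j.factorial : ℕ)) : ℂ)) *
        Polynomial.X ^ j) :
    ∀ k : ℕ, k ≤ 2 * m →
      iteratedDeriv k (fun z : ℂ => Complex.exp z * p.eval (-z) - p.eval z) 0 = 0 := by
  intro k hk
  -- coefficients of p
  have hc : ∀ n : ℕ, p.coeff n = if n ≤ m then
      ((((2 * m - n).factorial * m.factorial : ℕ) : ℂ) /
        ((((2 * m).factorial * (m - n).factorial * n.factorial : ℕ)) : ℂ)) else 0 := by
    intro n
    rw [hp, Polynomial.finset_sum_coeff]
    simp only [Polynomial.coeff_C_mul, Polynomial.coeff_X_pow, mul_ite, mul_one, mul_zero]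
    rw [Finset.sum_ite_eq]
    simp [Finset.mem_range, Nat.lt_succ_iff]
  have hfac : ∀ a : ℕ, ((a.factorial : ℂ) ≠ 0) :=
    fun a => Nat.cast_ne_zero.mpr (Nat.factorial_ne_zero a)
  -- the key term rewriting
  have hterm : ∀ j : ℕ, j ≤ 2 * m → (j.factorial : ℂ) * p.coeff j
      = ((2 * m - j).choose m : ℂ) * ((m.factorial : ℂ)^2 / ((2 * m).factorial : ℂ)) := by
    intro j hj
    by_cases h : j ≤ m
    · rw [hc j, if_pos h]
      have h2 : (2 * m - j).choose m * m.factorial * (m - j).factorial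
          = (2 * m - j).factorial := by
        have := Nat.choose_mul_factorial_mul_factorial (show m ≤ 2 * m - j by omega)
        rwa [show 2 * m - j - m = m - j by omega] at this
      have key : ((2 * m - j).factorial : ℂ)
          = ((2 * m - j).choose m : ℂ) * m.factorial * (m - j).factorial := by
        exact_mod_cast h2.symm
      push_cast
      rw [key]
      have n1 := hfac j
      have n2 := hfac (m - j)
      have n3 := hfac (2 * m)
      field_simp
    · rw [hc j, if_neg h]
      have h0 : (2 * m - j).choose m = 0 := Nat.choose_eq_zero_of_lt (by omega)
      simp [h0]
  -- the combinatorial identity over ℂ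
  have hZ : (∑ j ∈ Finset.range (k + 1),
      (-1 : ℤ)^j * (k.choose j) * ((2 * m - j).choose m)) = ((2 * m - k).choose m : ℤ) := by
    rw [padeG m k (2 * m) hk]
    split_ifs with h
    · have : (2 * m - k).choose (m - k) = (2 * m - k).choose m := by
        rw [← Nat.choose_symm (show m - k ≤ 2 * m - k by omega)]
        congr 1
        omega
      exact_mod_cast this
    · have h0 : (2 * m - k).choose m = 0 := Nat.choose_eq_zero_of_lt (by omega)
      simp [h0]
  have hCsum : (∑ j ∈ Finset.range (k + 1),
      (-1 : ℂ)^j * (k.choose j : ℂ) * ((2 * m - j).choose m : ℂ))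
      = ((2 * m - k).choose m : ℂ) := by
    have := congrArg (fun z : ℤ => (z : ℂ)) hZ
    push_cast at this
    exact this
  -- evaluate the iterated derivative
  rw [padeIter p k]
  simp only [neg_zero, Complex.exp_zero, one_mul]
  rw [padeT, Polynomial.eval_finset_sum]
  simp only [Polynomial.eval_smul, smul_eq_mul]
  have heval : ∀ j : ℕ, ((⇑(Polynomial.derivative (R := ℂ)))^[j] p).eval 0
      = (j.factorial : ℂ) * p.coeff j := by
    intro j
    rw [← Polynomial.coeff_zero_eq_eval_zero, Polynomial.coeff_iterate_derivative]
    simp [Nat.descFactorial_self, nsmul_eq_mul]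
  have hstep : (∑ j ∈ Finset.range (k + 1),
      (-1 : ℂ)^j * (k.choose j : ℂ) * ((⇑(Polynomial.derivative (R := ℂ)))^[j] p).eval 0)
      = (∑ j ∈ Finset.range (k + 1),
        (-1 : ℂ)^j * (k.choose j : ℂ) * ((2 * m - j).choose m : ℂ))
          * ((m.factorial : ℂ)^2 / ((2 * m).factorial : ℂ)) := by
    rw [Finset.sum_mul]
    refine Finset.sum_congr rfl fun j hj => ?_
    rw [heval j, hterm j (le_trans (Nat.lt_succ_iff.mp (Finset.mem_range.mp hj)) hk)]
    ring
  rw [hstep, hCsum, heval k, hterm k hk]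
  ring
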